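/- Let (h_n) be a nonzero real sequence with h_n = λ^n (1 + O(1/n)) as n → ∞ for some λ ≠ 0, satisfying for fixed m the relation A(n)-A(m)) h_{n+m+1} + (β_n - β_m) h_{n+m} + (A(n-1)-A(m-1)) h_{n+m-1} = 0 where A(n) → 0 and β_n → 0 as n → ∞. Then A(m) λ² + β_m λ + A(m-1) = 0 for every m. -/

import Mathlib

open Filter Asymptotics

/-- let `(h_n)` be a nonzero real sequence with
`h_n = λ^n (1 + O(1/n))` as `n → ∞`, `λ ≠ 0`, satisfying for every fixed `m` and all
sufficiently large `n` the relation
`(A(n) - A(m)) h_{n+m+1} + (β_n - β_m) h_{n+m} + (A(n-1) - A(m-1)) h_{n+m-1} = 0`,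
where `A(n) → 0` and `β(n) → 0`. Then `A(m) λ² + β_m λ + A(m-1) = 0` for every `m`. -/
theorem stmt16 (A β h : ℕ → ℝ) (lam : ℝ) (hlam : lam ≠ 0)
    (hA : Tendsto A atTop (nhds 0)) (hβ : Tendsto β atTop (nhds 0))
    (hasymp : (fun n : ℕ => h n / lam ^ n - 1) =O[atTop] fun n : ℕ => (1 : ℝ) / n)
    (hrel : ∀ m : ℕ, ∀ᶠ n : ℕ in atTop,
      (A n - A m) * h (n + m + 1) + (β n - β m) * h (n + m)
        + (A (n - 1) - A (m - 1)) * h (n + m - 1) = 0) :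
    ∀ m : ℕ, A m * lam ^ 2 + β m * lam + A (m - 1) = 0 := by
  intro m
  set g : ℕ → ℝ := fun n => h n / lam ^ n with hg
  have hgone : Tendsto g atTop (nhds 1) := by
    have h0 : Tendsto (fun n : ℕ => g n - 1) atTop (nhds 0) :=
      hasymp.trans_tendsto tendsto_one_div_atTop_nhds_zero_nat
    have := h0.add (tendsto_const_nhds (x := (1:ℝ)))
    simpa using this
  have hsub : Tendsto (fun n : ℕ => n - 1) atTop atTop := tendsto_sub_atTop_nat 1
  have hA' : Tendsto (fun n : ℕ => A (n - 1)) atTop (nhds 0) := hA.comp hsub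
  have hshift : ∀ k : ℕ, Tendsto (fun n : ℕ => g (n + k)) atTop (nhds 1) :=
    fun k => hgone.comp (tendsto_add_atTop_nat k)
  set E : ℕ → ℝ := fun n =>
    (A n - A m) * lam ^ 2 * g (n + m + 1) + (β n - β m) * lam * g (n + m)
      + (A (n - 1) - A (m - 1)) * g (n + m - 1) with hE
  have h1 : Tendsto (fun n : ℕ => g (n + m + 1)) atTop (nhds 1) := by
    have := hshift (m + 1); simpa [← add_assoc] using this
  have h2 : Tendsto (fun n : ℕ => g (n + m)) atTop (nhds 1) := hshift m
  have h3 : Tendsto (fun n : ℕ => g (n + m - 1)) atTop (nhds 1) := by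
    have := hgone.comp (hsub.comp (tendsto_add_atTop_nat m))
    exact this
  have hlim : Tendsto E atTop
      (nhds ((0 - A m) * lam ^ 2 * 1 + (0 - β m) * lam * 1 + (0 - A (m - 1)) * 1)) :=
    ((((hA.sub_const (A m)).mul_const (lam ^ 2)).mul h1).add
      (((hβ.sub_const (β m)).mul_const lam).mul h2)).add
      ((hA'.sub_const (A (m - 1))).mul h3)
  have hev : E =ᶠ[atTop] fun _ => (0 : ℝ) := by
    filter_upwards [hrel m, eventually_ge_atTop 1] with n hn hn1
    have hk : n + m = (n + m - 1) + 1 := by omega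
    have hk2 : n + m + 1 = (n + m - 1) + 2 := by omega
    have hlp : (lam : ℝ) ^ (n + m - 1) ≠ 0 := pow_ne_zero _ hlam
    have e1 : (lam : ℝ) ^ (n + m + 1) = lam ^ (n + m - 1) * lam ^ 2 := by
      rw [hk2, pow_add]
    have e2 : (lam : ℝ) ^ (n + m) = lam ^ (n + m - 1) * lam := by
      rw [← pow_succ, ← hk]
    have : E n = ((A n - A m) * h (n + m + 1) + (β n - β m) * h (n + m)
        + (A (n - 1) - A (m - 1)) * h (n + m - 1)) / lam ^ (n + m - 1) := by
      simp only [hE, hg, e1, e2]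
      field_simp
    rw [this, hn, zero_div]
  have hlim0 : Tendsto E atTop (nhds 0) := by
    rw [tendsto_congr' hev]; exact tendsto_const_nhds
  have := tendsto_nhds_unique hlim hlim0
  nlinarith [this]
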